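/- Let G be a group and P a right LCM submonoid of G, and for p ∈ P let V_p be the isometric shift on ℓ²(P). Then for all p, q ∈ P: if pP ∩ qP = wP for some w ∈ P, then p⁻¹w ∈ P and q⁻¹w ∈ P, and V_p* V_q = V_{p⁻¹w} V_{q⁻¹w}*; and if pP ∩ qP = ∅, then V_p* V_q = 0. -/

import Mathlib

/-- The principal right ideal `pP = {p r : r ∈ P}` generated by `p`. -/
def rIdeal {G : Type*} [Group G] (P : Submonoid G) (p : G) : Set G :=
  {x | ∃ r ∈ P, x = p * r}

/-- The canonical orthonormal basis vector `δ_r` of `ℓ²(P)`. -/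
noncomputable def delta {G : Type*} [Group G] (P : Submonoid G) (r : P) :
    lp (fun _ : P => ℂ) 2 :=
  haveI := Classical.decEq P
  lp.single 2 r 1

local notation "⟪" x ", " y "⟫" => @inner ℂ _ _ x y

section Helpers

variable {G : Type*} [Group G] (P : Submonoid G)

lemma inner_delta_left (r : P) (f : lp (fun _ : P => ℂ) 2) :
    ⟪delta P r, f⟫ = f r := by
  letI := Classical.decEq P
  simp only [delta]
  rw [lp.inner_single_left]
  simp [RCLike.inner_apply]

lemma delta_ext {f g : lp (fun _ : P => ℂ) 2}
    (h : ∀ r : P, ⟪delta P r, f⟫ = ⟪delta P r, g⟫) : f = g := by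
  apply lp.ext
  funext r
  have := h r
  rwa [inner_delta_left, inner_delta_left] at this

lemma delta_apply (r s : P) :
    (delta P r) s = @ite _ (s = r) (Classical.decEq P s r) (1:ℂ) 0 := by
  letI := Classical.decEq (↥P)
  simp only [delta]
  rw [lp.single_apply]
  split_ifs with h
  · cases h; simp
  · simp [h]

variable {P}

lemma adjoint_delta_mem (q : P) (V : lp (fun _ : P => ℂ) 2 →L[ℂ] lp (fun _ : P => ℂ) 2)
    (hV : ∀ r : P, V (delta P r) = delta P (q * r)) (t : P) :
    ContinuousLinearMap.adjoint V (delta P (q * t)) = delta P t := by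
  apply delta_ext
  intro r
  rw [ContinuousLinearMap.adjoint_inner_right, hV r, inner_delta_left, inner_delta_left,
    delta_apply, delta_apply]
  by_cases h : r = t
  · subst h; simp
  · rw [if_neg h, if_neg]
    intro hqq
    have hg : (q : G) * r = (q : G) * t := by exact_mod_cast congrArg Subtype.val hqq
    exact h (Subtype.ext (mul_left_cancel hg))

lemma adjoint_delta_notmem (q : P) (V : lp (fun _ : P => ℂ) 2 →L[ℂ] lp (fun _ : P => ℂ) 2)
    (hV : ∀ r : P, V (delta P r) = delta P (q * r)) (s : P)
    (hs : ∀ t : P, (s : G) ≠ (q : G) * t) :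
    ContinuousLinearMap.adjoint V (delta P s) = 0 := by
  apply delta_ext
  intro r
  rw [ContinuousLinearMap.adjoint_inner_right, hV r, inner_delta_left, delta_apply,
    inner_zero_right, if_neg]
  intro h
  exact hs r (by exact_mod_cast (congrArg Subtype.val h).symm)

lemma clm_ext_adjoint_delta {A B : lp (fun _ : P => ℂ) 2 →L[ℂ] lp (fun _ : P => ℂ) 2}
    (h : ∀ r : P, ContinuousLinearMap.adjoint A (delta P r)
      = ContinuousLinearMap.adjoint B (delta P r)) : A = B := by
  apply ContinuousLinearMap.ext
  intro x
  apply delta_ext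
  intro r
  rw [← ContinuousLinearMap.adjoint_inner_left, ← ContinuousLinearMap.adjoint_inner_left, h r]

end Helpers

set_option maxHeartbeats 2000000 in
/-- For the isometric shifts on `ℓ²(P)` over a right LCM submonoid `P` of a group `G`:
if `pP ∩ qP = wP` then `p⁻¹w, q⁻¹w ∈ P` and `V_p* V_q = V_{p⁻¹w} V_{q⁻¹w}*`, while if
`pP ∩ qP = ∅` then `V_p* V_q = 0`. -/
theorem adjoint_shift_mul_shift {G : Type*} [Group G] (P : Submonoid G)
    (hLCM : ∀ p ∈ P, ∀ q ∈ P, (rIdeal P p ∩ rIdeal P q).Nonempty →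
      ∃ w ∈ P, rIdeal P p ∩ rIdeal P q = rIdeal P w)
    (p q : P)
    (Vp Vq : lp (fun _ : P => ℂ) 2 →L[ℂ] lp (fun _ : P => ℂ) 2)
    (hVp : ∀ r : P, Vp (delta P r) = delta P (p * r))
    (hVq : ∀ r : P, Vq (delta P r) = delta P (q * r)) :
    (∀ w : P, rIdeal P (p : G) ∩ rIdeal P (q : G) = rIdeal P (w : G) →
      ∃ (hpw : (p : G)⁻¹ * (w : G) ∈ P) (hqw : (q : G)⁻¹ * (w : G) ∈ P),
        ∀ Vpw Vqw : lp (fun _ : P => ℂ) 2 →L[ℂ] lp (fun _ : P => ℂ) 2,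
          (∀ r : P, Vpw (delta P r) = delta P (⟨(p : G)⁻¹ * (w : G), hpw⟩ * r)) →
          (∀ r : P, Vqw (delta P r) = delta P (⟨(q : G)⁻¹ * (w : G), hqw⟩ * r)) →
          ContinuousLinearMap.adjoint Vp ∘L Vq = Vpw ∘L ContinuousLinearMap.adjoint Vqw) ∧
    (rIdeal P (p : G) ∩ rIdeal P (q : G) = ∅ →
      ContinuousLinearMap.adjoint Vp ∘L Vq = 0) := by
  constructor
  · intro w hw
    have hwmem : (w : G) ∈ rIdeal P (p : G) ∩ rIdeal P (q : G) := by
      rw [hw]; exact ⟨1, P.one_mem, (mul_one _).symm⟩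
    obtain ⟨a, ha, hwa⟩ := hwmem.1
    obtain ⟨b, hb, hwb⟩ := hwmem.2
    have hpw : (p : G)⁻¹ * (w : G) ∈ P := by
      have : (p : G)⁻¹ * (w : G) = a := by rw [hwa]; group
      exact this ▸ ha
    have hqw : (q : G)⁻¹ * (w : G) ∈ P := by
      have : (q : G)⁻¹ * (w : G) = b := by rw [hwb]; group
      exact this ▸ hb
    refine ⟨hpw, hqw, ?_⟩
    intro Vpw Vqw hVpw hVqw
    set pw : P := ⟨(p : G)⁻¹ * (w : G), hpw⟩ with hpwdef
    set qw : P := ⟨(q : G)⁻¹ * (w : G), hqw⟩ with hqwdef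
    apply clm_ext_adjoint_delta
    intro r
    rw [ContinuousLinearMap.adjoint_comp, ContinuousLinearMap.adjoint_comp,
      ContinuousLinearMap.adjoint_adjoint, ContinuousLinearMap.adjoint_adjoint]
    simp only [ContinuousLinearMap.comp_apply]
    rw [hVp r]
    by_cases hc : ∃ t : P, (p : G) * r = (q : G) * t
    · obtain ⟨t, ht⟩ := hc
      have hmem : ((p : G) * r) ∈ rIdeal P (w : G) := by
        rw [← hw]; exact ⟨⟨r, r.2, rfl⟩, ⟨t, t.2, ht⟩⟩
      obtain ⟨u, hu, huw⟩ := hmem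
      have hr : r = pw * (⟨u, hu⟩ : P) := by
        apply Subtype.ext
        show (r : G) = (p : G)⁻¹ * (w : G) * u
        rw [mul_assoc, ← huw]; group
      have hprqt : (p * r : P) = q * t := by
        apply Subtype.ext
        exact_mod_cast ht
      rw [hprqt, adjoint_delta_mem q Vq hVq t, hr, adjoint_delta_mem pw Vpw hVpw, hVqw]
      congr 1
      apply Subtype.ext
      show (t : G) = (q : G)⁻¹ * (w : G) * u
      have : (t : G) = (q : G)⁻¹ * ((p : G) * r) := by rw [ht]; group
      rw [this, huw, mul_assoc]
    · push_neg at hc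
      rw [adjoint_delta_notmem q Vq hVq (p * r) (by intro t; exact_mod_cast hc t)]
      rw [adjoint_delta_notmem pw Vpw hVpw r, map_zero]
      intro t hrt
      have : (p : G) * r ∈ rIdeal P (w : G) := by
        refine ⟨t, t.2, ?_⟩
        rw [hrt]
        show (p : G) * ((p : G)⁻¹ * (w : G) * t) = (w : G) * t
        group
      rw [← hw] at this
      obtain ⟨s, hs, hqs⟩ := this.2
      exact hc ⟨s, hs⟩ hqs
  · intro hempty
    apply clm_ext_adjoint_delta
    intro r
    rw [ContinuousLinearMap.adjoint_comp, ContinuousLinearMap.adjoint_adjoint]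
    simp only [ContinuousLinearMap.comp_apply]
    rw [hVp r, adjoint_delta_notmem q Vq hVq (p * r) ?_]
    · simp
    · intro t ht
      have : ((p : G) * r) ∈ rIdeal P (p : G) ∩ rIdeal P (q : G) :=
        ⟨⟨r, r.2, rfl⟩, ⟨t, t.2, by exact_mod_cast ht⟩⟩
      rw [hempty] at this
      exact this
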